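/- Suppose T is an ε-approximate decision tree w.r.t. (S, Φ) and Φ is γ-balanced. Then for every vertex v of T with child w, |S(T,w)| ≥ (γ − 2ε)·|S(T,v)|. -/
import Mathlib


/-- Edit distance (symmetric difference size) of two multisets. -/
def symmDist {α : Type} [DecidableEq α] (S S' : Multiset α) : ℕ :=
  (S - S').card + (S' - S).card

/-- Relative edit distance `ED*(S,S') = △(S,S') / max(|S|,|S'|)`. -/
noncomputable def edStar {α : Type} [DecidableEq α] (S S' : Multiset α) : ℝ :=
  (symmDist S S' : ℝ) / ((max S.card S'.card : ℕ) : ℝ)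

/-- Binary decision trees: each internal vertex carries a split rule `α → Bool`. -/
inductive DTree (α : Type) where
  | leaf : DTree α
  | node : (α → Bool) → DTree α → DTree α → DTree α

/-- `Occurs T S t A` says that `t` is a subtree (vertex) of `T` and `A = S(T,v)` is
the submultiset of `S` reaching it. -/
inductive Occurs {α : Type} : DTree α → Multiset α → DTree α → Multiset α → Prop
  | refl (t : DTree α) (S : Multiset α) : Occurs t S t S
  | left {t : DTree α} {S : Multiset α} {σ : α → Bool} {t0 t1 : DTree α}
      {A : Multiset α} : Occurs t S (DTree.node σ t0 t1) A →
      Occurs t S t0 (A.filter fun x => σ x = false)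
  | right {t : DTree α} {S : Multiset α} {σ : α → Bool} {t0 t1 : DTree α}
      {A : Multiset α} : Occurs t S (DTree.node σ t0 t1) A →
      Occurs t S t1 (A.filter fun x => σ x = true)

/-- `T` is `ε`-approximate w.r.t. `(S,Φ)`: the decision (split rule or leaf) at each
vertex `v` equals `Φ(S_v)` for some multiset `S_v` with `ED*(S(T,v),S_v) ≤ ε`.
A decision rule `Φ` returns `some σ` (a split rule) or `none` (make a leaf). -/
def EpsApproxOn {α : Type} [DecidableEq α] (Φ : Multiset α → Option (α → Bool))
    (ε : ℝ) : DTree α → Multiset α → Prop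
  | DTree.leaf, S => ∃ Sv : Multiset α, edStar S Sv ≤ ε ∧ Φ Sv = none
  | DTree.node σ t0 t1, S =>
      (∃ Sv : Multiset α, edStar S Sv ≤ ε ∧ Φ Sv = some σ) ∧
      EpsApproxOn Φ ε t0 (S.filter fun x => σ x = false) ∧
      EpsApproxOn Φ ε t1 (S.filter fun x => σ x = true)


lemma epsApprox_of_occurs {α : Type} [DecidableEq α] (Φ : Multiset α → Option (α → Bool))
    (ε : ℝ) : ∀ {T S t A : _}, Occurs T S t A → EpsApproxOn Φ ε T S → EpsApproxOn Φ ε t A := by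
  intro T S t A h
  induction h with
  | refl => exact id
  | left h ih => intro happ; exact (ih happ).2.1
  | right h ih => intro happ; exact (ih happ).2.2

/-- If `T` is `ε`-approximate w.r.t. `(S,Φ)` and `Φ` is `γ`-balanced, then for every
vertex `v` of `T` with child `w`, `|S(T,w)| ≥ (γ − 2ε)·|S(T,v)|`. -/
theorem stmt13 {α : Type} [DecidableEq α] (Φ : Multiset α → Option (α → Bool))
    (γ ε : ℝ) (hε0 : 0 < ε) (hε1 : ε < 1) (hγ0 : 0 < γ) (hγ1 : γ ≤ 1)
    (hbal : ∀ (S : Multiset α) (σ : α → Bool), Φ S = some σ →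
      ∀ b : Bool, γ * (S.card : ℝ) ≤ ((S.filter fun x => σ x = b).card : ℝ))
    (T : DTree α) (S : Multiset α) (hS : S ≠ 0)
    (happ : EpsApproxOn Φ ε T S)
    {σ : α → Bool} {t0 t1 : DTree α} {A : Multiset α}
    (hocc : Occurs T S (DTree.node σ t0 t1) A) :
    ∀ b : Bool, (γ - 2 * ε) * (A.card : ℝ) ≤
      ((A.filter fun x => σ x = b).card : ℝ) := by
  have happn : EpsApproxOn Φ ε (DTree.node σ t0 t1) A := epsApprox_of_occurs Φ ε hocc happ
  obtain ⟨Sv, hed, hΦ⟩ := happn.1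
  intro b
  by_cases hγε : γ ≤ 2 * ε
  · have h0 : (0:ℝ) ≤ ((A.filter fun x => σ x = b).card : ℝ) := by positivity
    have h0' : (0:ℝ) ≤ (A.card : ℝ) := by positivity
    nlinarith
  push_neg at hγε
  by_cases hn : A.card = 0
  · rw [Multiset.card_eq_zero] at hn
    subst hn
    simp
  set n : ℝ := (A.card : ℝ) with hn_def
  set m : ℝ := (Sv.card : ℝ) with hm_def
  set d1 : ℝ := ((A - Sv).card : ℝ) with hd1_def
  set d2 : ℝ := ((Sv - A).card : ℝ) with hd2_def
  set f : ℝ := ((A.filter fun x => σ x = b).card : ℝ) with hf_def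
  have hd1nn : (0:ℝ) ≤ d1 := Nat.cast_nonneg _
  have hd2nn : (0:ℝ) ≤ d2 := Nat.cast_nonneg _
  have hnpos : (0:ℝ) < n := by
    have h : 0 < A.card := Nat.pos_of_ne_zero hn
    rw [hn_def]; exact_mod_cast h
  -- m ≤ n + d2
  have h1 : m ≤ n + d2 := by
    have h := Multiset.card_le_card (le_add_tsub : Sv ≤ A + (Sv - A))
    rw [Multiset.card_add] at h
    rw [hm_def, hn_def, hd2_def]; exact_mod_cast h
  -- n ≤ m + d1
  have h2 : n ≤ m + d1 := by
    have h := Multiset.card_le_card (le_add_tsub : A ≤ Sv + (A - Sv))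
    rw [Multiset.card_add] at h
    rw [hn_def, hm_def, hd1_def]; exact_mod_cast h
  -- balance on Sv
  have h3 : γ * m ≤ ((Sv.filter fun x => σ x = b).card : ℝ) := hbal Sv σ hΦ b
  -- |Sv.filter| ≤ f + d2
  have h4 : ((Sv.filter fun x => σ x = b).card : ℝ) ≤ f + d2 := by
    have hle : Sv.filter (fun x => σ x = b) ≤ (A + (Sv - A)).filter (fun x => σ x = b) :=
      Multiset.filter_le_filter _ le_add_tsub
    have h := Multiset.card_le_card hle
    rw [Multiset.filter_add, Multiset.card_add] at h
    have h' : ((Sv.filter fun x => σ x = b).card : ℝ) ≤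
        ((A.filter fun x => σ x = b).card : ℝ) + (((Sv - A).filter fun x => σ x = b).card : ℝ) := by
      exact_mod_cast h
    have h'' : (((Sv - A).filter fun x => σ x = b).card : ℝ) ≤ d2 := by
      rw [hd2_def]
      exact_mod_cast Multiset.card_le_card (Multiset.filter_le _ _)
    linarith
  -- edit distance bound
  have h5 : d1 + d2 ≤ ε * (n + d2) := by
    have hM : (0:ℝ) < ((max A.card Sv.card : ℕ) : ℝ) := by
      have : 0 < max A.card Sv.card := lt_of_lt_of_le (Nat.pos_of_ne_zero hn) (le_max_left _ _)
      exact_mod_cast this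
    have hed' : d1 + d2 ≤ ε * ((max A.card Sv.card : ℕ) : ℝ) := by
      have := hed
      rw [edStar, div_le_iff₀ hM] at this
      calc d1 + d2 = ((symmDist A Sv : ℕ) : ℝ) := by
            rw [symmDist]; push_cast; ring
        _ ≤ ε * ((max A.card Sv.card : ℕ) : ℝ) := this
    have hMle : ((max A.card Sv.card : ℕ) : ℝ) ≤ n + d2 := by
      have : ((max A.card Sv.card : ℕ) : ℝ) = max n m := by
        push_cast [Nat.cast_max]; rfl
      rw [this]
      exact max_le (by linarith) h1
    calc d1 + d2 ≤ ε * ((max A.card Sv.card : ℕ) : ℝ) := hed'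
      _ ≤ ε * (n + d2) := by nlinarith
  -- conclude
  have hεhalf : ε < 1/2 := by linarith
  nlinarith [mul_nonneg (sub_nonneg.mpr hγ1) hd1nn, mul_nonneg (by linarith : (0:ℝ) ≤ 1 - 2*ε) hd2nn, mul_nonneg hγ0.le hd1nn]
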